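/- Let X be a finite set, P and Q probability distributions on X with full support, ρ > 0 an integer, α = 1/(1+ρ), and Q̂*(x) = Q(x)^α / ∑_y Q(y)^α. Then (1/ρ)·log(∑_x P(x)·Q̂*(x)^{-ρ}) = H_α(P) + I_α(P,Q). -/

import Mathlib

open Real Finset

theorem stmt15 {X : Type*} [Fintype X]
    (P Q : X → ℝ) (hP : ∀ x, 0 < P x) (hPsum : ∑ x, P x = 1)
    (hQ : ∀ x, 0 < Q x) (hQsum : ∑ x, Q x = 1)
    (ρ : ℕ) (hρ : 0 < ρ) (α : ℝ) (hα : α = 1 / (1 + (ρ : ℝ)))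
    (Qhat : X → ℝ) (hQhat : ∀ x, Qhat x = Q x ^ α / ∑ y, Q y ^ α) :
    (1 / (ρ : ℝ)) * Real.logb 2 (∑ x, P x * Qhat x ^ (-(ρ : ℝ))) =
      (1 / (1 - α)) * Real.logb 2 (∑ x, P x ^ α)
      + ((α / (1 - α)) * Real.logb 2
          (∑ x, P x * (∑ x', (Q x' / Q x) ^ α) ^ ((1 - α) / α))
        - (1 / (1 - α)) * Real.logb 2 (∑ x, P x ^ α)) := by
  have hρR : (0:ℝ) < (ρ : ℝ) := by exact_mod_cast hρ
  have h1ρ : (0:ℝ) < 1 + (ρ : ℝ) := by linarith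
  have hαpos : 0 < α := by rw [hα]; positivity
  have hαne : α ≠ 0 := ne_of_gt hαpos
  have h1α : 1 - α = (ρ : ℝ) / (1 + (ρ : ℝ)) := by
    rw [hα]; field_simp; ring
  have h1αpos : 0 < 1 - α := by rw [h1α]; positivity
  have hfrac : (1 - α) / α = (ρ : ℝ) := by
    rw [h1α, hα]; field_simp
  have hcoef : 1 / (ρ : ℝ) = α / (1 - α) := by
    rw [h1α, hα]; field_simp
  have hS : 0 < ∑ y, Q y ^ α := by
    apply Finset.sum_pos (fun y _ => Real.rpow_pos_of_pos (hQ y) α)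
    have : Nonempty X := by
      rcases isEmpty_or_nonempty X with h | h
      · simp at hPsum
      · exact h
    exact Finset.univ_nonempty
  have hterm : ∀ x : X, Qhat x ^ (-(ρ : ℝ)) =
      (∑ x', (Q x' / Q x) ^ α) ^ ((1 - α) / α) := by
    intro x
    have hQx : 0 < Q x ^ α := Real.rpow_pos_of_pos (hQ x) α
    have hsum : (∑ x', (Q x' / Q x) ^ α) = (∑ y, Q y ^ α) / Q x ^ α := by
      rw [show (∑ x' : X, (Q x' / Q x) ^ α) = ∑ x' : X, Q x' ^ α / Q x ^ α from
        Finset.sum_congr rfl fun y _ => Real.div_rpow (hQ y).le (hQ x).le α,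
        ← Finset.sum_div]
    rw [hsum, hfrac, hQhat x]
    rw [Real.rpow_neg (div_pos hQx hS).le, ← Real.inv_rpow (div_pos hQx hS).le, inv_div]
  have hsums : (∑ x, P x * Qhat x ^ (-(ρ : ℝ))) =
      ∑ x, P x * (∑ x', (Q x' / Q x) ^ α) ^ ((1 - α) / α) :=
    Finset.sum_congr rfl fun x _ => by rw [hterm x]
  rw [hsums, hcoef]
  ring
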